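/- Let κ > 0 and M ≥ 1, and suppose Ω, r, φ satisfy, on Q, equations (N1) and (N3), the axis normalization, and 1/M ≤ Ω ≤ M. Let ε > 0 and assume the flux smallness: for every (u,ū) ∈ Q, ∫_u^{ū} ( r (∂_uφ)² )(u′,ū) du′ ≤ ε, ∫_u^{ū} ( g(φ)²/r )(u′,ū) du′ ≤ ε and ∫_u^{ū} ( g(φ)²/r )(u,ū′) dū′ ≤ ε. Then there exist ε₀ > 0 and C > 0, depending only on κ and M, such that if ε ≤ ε₀ then on all of Q: |∂_ū r − 1/2| ≤ Cε, |∂_u r + 1/2| ≤ Cε, |r − ϱ| ≤ C ε ϱ, and |Ω − 1| ≤ Cε. -/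

import Mathlib

open Real

/-- Partial derivative in the null variable `u`. -/
noncomputable def pdu (f : ℝ → ℝ → ℝ) (u v : ℝ) : ℝ := deriv (fun u' => f u' v) u

/-- Partial derivative in the null variable `ū`. -/
noncomputable def pdub (f : ℝ → ℝ → ℝ) (u v : ℝ) : ℝ := deriv (fun v' => f u v') v

/-- The rescaled double-null domain `Q = {(u,ū) : −2 ≤ u ≤ ū ≤ 0}`. -/
def Qset : Set (ℝ × ℝ) := {p | -2 ≤ p.1 ∧ p.1 ≤ p.2 ∧ p.2 ≤ 0}

/-- `ϱ = (ū − u)/2`. -/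
noncomputable def vrho (p : ℝ × ℝ) : ℝ := (p.2 - p.1) / 2

/-- The axis normalization `r = 0`, `∂_ū r = 1/2`, `∂_u r = −1/2`, `Ω = 1`, `φ = 0` on
the axis `Γ = {u = ū}` (inside `Q`). -/
def AxisNormalized (Ω r φ : ℝ → ℝ → ℝ) : Prop :=
  ∀ u ∈ Set.Icc (-2 : ℝ) 0,
    r u u = 0 ∧ pdub r u u = 1 / 2 ∧ pdu r u u = -(1 / 2) ∧ Ω u u = 1 ∧ φ u u = 0

/-- `Ω`, `r`, `φ` are `Cⁿ` on a neighborhood of `Q`. -/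
def SmoothNearQ (n : ℕ) (Ω r φ : ℝ → ℝ → ℝ) : Prop :=
  ∃ V : Set (ℝ × ℝ), IsOpen V ∧ Qset ⊆ V ∧
    ContDiffOn ℝ n (fun p : ℝ × ℝ => Ω p.1 p.2) V ∧
    ContDiffOn ℝ n (fun p : ℝ × ℝ => r p.1 p.2) V ∧
    ContDiffOn ℝ n (fun p : ℝ × ℝ => φ p.1 p.2) V

/-- Equation (N1): `∂_u(Ω^{−2} ∂_u r) = −Ω^{−2} κ r (∂_u φ)²`. -/
def EqN1 (κ : ℝ) (Ω r φ : ℝ → ℝ → ℝ) (u v : ℝ) : Prop :=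
  pdu (fun u' v' => ((Ω u' v') ^ 2)⁻¹ * pdu r u' v') u v
    = -(((Ω u v) ^ 2)⁻¹ * κ * r u v * (pdu φ u v) ^ 2)

/-- Equation (N2): `∂_ū(Ω^{−2} ∂_ū r) = −Ω^{−2} κ r (∂_ū φ)²`. -/
def EqN2 (κ : ℝ) (Ω r φ : ℝ → ℝ → ℝ) (u v : ℝ) : Prop :=
  pdub (fun u' v' => ((Ω u' v') ^ 2)⁻¹ * pdub r u' v') u v
    = -(((Ω u v) ^ 2)⁻¹ * κ * r u v * (pdub φ u v) ^ 2)

/-- Equation (N3): `∂_u ∂_ū r = κ Ω² g(φ)² / (4r)`. -/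
def EqN3 (κ : ℝ) (g : ℝ → ℝ) (Ω r φ : ℝ → ℝ → ℝ) (u v : ℝ) : Prop :=
  pdu (pdub r) u v = κ * (Ω u v) ^ 2 * (g (φ u v)) ^ 2 / (4 * r u v)

/-- Equation (N4): `∂_u(r ∂_ū φ) + ∂_ū(r ∂_u φ) = −Ω² g(φ)g′(φ)/(2r)`. -/
def EqN4 (g : ℝ → ℝ) (Ω r φ : ℝ → ℝ → ℝ) (u v : ℝ) : Prop :=
  pdu (fun u' v' => r u' v' * pdub φ u' v') u v
      + pdub (fun u' v' => r u' v' * pdu φ u' v') u v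
    = -((Ω u v) ^ 2 * g (φ u v) * deriv g (φ u v) / (2 * r u v))

/-- Equation (N5): `∂_u ∂_ū (log Ω) = −(κ/2) ∂_u φ ∂_ū φ − (κΩ²/8) g(φ)²/r²`. -/
def EqN5 (κ : ℝ) (g : ℝ → ℝ) (Ω r φ : ℝ → ℝ → ℝ) (u v : ℝ) : Prop :=
  pdu (pdub (fun u' v' => Real.log (Ω u' v'))) u v
    = -((κ / 2) * pdu φ u v * pdub φ u v)
      - (κ * (Ω u v) ^ 2 / 8) * (g (φ u v)) ^ 2 / (r u v) ^ 2

section CalcAux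

variable {V : Set (ℝ × ℝ)} {f : ℝ → ℝ → ℝ}

lemma curve_fst (b t : ℝ) : HasDerivAt (fun s : ℝ => ((s, b) : ℝ × ℝ)) ((1:ℝ), (0:ℝ)) t :=
  (hasDerivAt_id _).prodMk (hasDerivAt_const _ _)

lemma curve_snd (a t : ℝ) : HasDerivAt (fun s : ℝ => ((a, s) : ℝ × ℝ)) ((0:ℝ), (1:ℝ)) t :=
  (hasDerivAt_const _ _).prodMk (hasDerivAt_id _)

lemma slice1_fst (hV : IsOpen V) (hf : ContDiffOn ℝ 1 (fun p : ℝ × ℝ => f p.1 p.2) V)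
    {q : ℝ × ℝ} (hq : q ∈ V) :
    HasDerivAt (fun s => f s q.2) (fderiv ℝ (fun p : ℝ × ℝ => f p.1 p.2) q ((1:ℝ), (0:ℝ))) q.1 := by
  have hd : DifferentiableAt ℝ (fun p : ℝ × ℝ => f p.1 p.2) q :=
    (hf.contDiffAt (hV.mem_nhds hq)).differentiableAt one_ne_zero
  exact hd.hasFDerivAt.comp_hasDerivAt _ (curve_fst q.2 q.1)

lemma slice1_snd (hV : IsOpen V) (hf : ContDiffOn ℝ 1 (fun p : ℝ × ℝ => f p.1 p.2) V)
    {q : ℝ × ℝ} (hq : q ∈ V) :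
    HasDerivAt (fun t => f q.1 t) (fderiv ℝ (fun p : ℝ × ℝ => f p.1 p.2) q ((0:ℝ), (1:ℝ))) q.2 := by
  have hd : DifferentiableAt ℝ (fun p : ℝ × ℝ => f p.1 p.2) q :=
    (hf.contDiffAt (hV.mem_nhds hq)).differentiableAt one_ne_zero
  exact hd.hasFDerivAt.comp_hasDerivAt _ (curve_snd q.1 q.2)

lemma pdu_eq_fderiv (hV : IsOpen V) (hf : ContDiffOn ℝ 1 (fun p : ℝ × ℝ => f p.1 p.2) V)
    {q : ℝ × ℝ} (hq : q ∈ V) :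
    pdu f q.1 q.2 = fderiv ℝ (fun p : ℝ × ℝ => f p.1 p.2) q ((1:ℝ), (0:ℝ)) :=
  (slice1_fst hV hf hq).deriv

lemma pdub_eq_fderiv (hV : IsOpen V) (hf : ContDiffOn ℝ 1 (fun p : ℝ × ℝ => f p.1 p.2) V)
    {q : ℝ × ℝ} (hq : q ∈ V) :
    pdub f q.1 q.2 = fderiv ℝ (fun p : ℝ × ℝ => f p.1 p.2) q ((0:ℝ), (1:ℝ)) :=
  (slice1_snd hV hf hq).deriv

lemma cont1 (hV : IsOpen V) (hf : ContDiffOn ℝ 1 (fun p : ℝ × ℝ => f p.1 p.2) V) (w : ℝ × ℝ) :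
    ContinuousOn (fun q => fderiv ℝ (fun p : ℝ × ℝ => f p.1 p.2) q w) V :=
  (hf.continuousOn_fderiv_of_isOpen hV le_rfl).clm_apply continuousOn_const

lemma fderiv_C1 (hV : IsOpen V) (hf : ContDiffOn ℝ 2 (fun p : ℝ × ℝ => f p.1 p.2) V) :
    ContDiffOn ℝ 1 (fderiv ℝ (fun p : ℝ × ℝ => f p.1 p.2)) V :=
  hf.fderiv_of_isOpen hV (by norm_num)

lemma slice2_fst (hV : IsOpen V) (hf : ContDiffOn ℝ 2 (fun p : ℝ × ℝ => f p.1 p.2) V)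
    {q : ℝ × ℝ} (hq : q ∈ V) (w : ℝ × ℝ) :
    HasDerivAt (fun s => fderiv ℝ (fun p : ℝ × ℝ => f p.1 p.2) (s, q.2) w)
      (fderiv ℝ (fderiv ℝ (fun p : ℝ × ℝ => f p.1 p.2)) q ((1:ℝ), (0:ℝ)) w) q.1 := by
  have hd : DifferentiableAt ℝ (fderiv ℝ (fun p : ℝ × ℝ => f p.1 p.2)) q :=
    ((fderiv_C1 hV hf).contDiffAt (hV.mem_nhds hq)).differentiableAt one_ne_zero
  have h1 : HasDerivAt (fun s => fderiv ℝ (fun p : ℝ × ℝ => f p.1 p.2) (s, q.2))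
      (fderiv ℝ (fderiv ℝ (fun p : ℝ × ℝ => f p.1 p.2)) q ((1:ℝ), (0:ℝ))) q.1 :=
    hd.hasFDerivAt.comp_hasDerivAt _ (curve_fst q.2 q.1)
  simpa using h1.clm_apply (hasDerivAt_const q.1 w)

lemma slice2_snd (hV : IsOpen V) (hf : ContDiffOn ℝ 2 (fun p : ℝ × ℝ => f p.1 p.2) V)
    {q : ℝ × ℝ} (hq : q ∈ V) (w : ℝ × ℝ) :
    HasDerivAt (fun t => fderiv ℝ (fun p : ℝ × ℝ => f p.1 p.2) (q.1, t) w)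
      (fderiv ℝ (fderiv ℝ (fun p : ℝ × ℝ => f p.1 p.2)) q ((0:ℝ), (1:ℝ)) w) q.2 := by
  have hd : DifferentiableAt ℝ (fderiv ℝ (fun p : ℝ × ℝ => f p.1 p.2)) q :=
    ((fderiv_C1 hV hf).contDiffAt (hV.mem_nhds hq)).differentiableAt one_ne_zero
  have h1 : HasDerivAt (fun t => fderiv ℝ (fun p : ℝ × ℝ => f p.1 p.2) (q.1, t))
      (fderiv ℝ (fderiv ℝ (fun p : ℝ × ℝ => f p.1 p.2)) q ((0:ℝ), (1:ℝ))) q.2 :=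
    hd.hasFDerivAt.comp_hasDerivAt _ (curve_snd q.1 q.2)
  simpa using h1.clm_apply (hasDerivAt_const q.2 w)

lemma schwarz (hV : IsOpen V) (hf : ContDiffOn ℝ 2 (fun p : ℝ × ℝ => f p.1 p.2) V)
    {q : ℝ × ℝ} (hq : q ∈ V) (v w : ℝ × ℝ) :
    fderiv ℝ (fderiv ℝ (fun p : ℝ × ℝ => f p.1 p.2)) q v w
      = fderiv ℝ (fderiv ℝ (fun p : ℝ × ℝ => f p.1 p.2)) q w v := by
  have hd : DifferentiableAt ℝ (fderiv ℝ (fun p : ℝ × ℝ => f p.1 p.2)) q :=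
    ((fderiv_C1 hV hf).contDiffAt (hV.mem_nhds hq)).differentiableAt one_ne_zero
  refine second_derivative_symmetric_of_eventually (f := fun p : ℝ × ℝ => f p.1 p.2) ?_
    hd.hasFDerivAt v w
  filter_upwards [hV.mem_nhds hq] with y hy
  exact ((hf.contDiffAt (hV.mem_nhds hy)).differentiableAt (by norm_num)).hasFDerivAt

lemma cont2 (hV : IsOpen V) (hf : ContDiffOn ℝ 2 (fun p : ℝ × ℝ => f p.1 p.2) V) (w₁ w₂ : ℝ × ℝ) :
    ContinuousOn (fun q => fderiv ℝ (fderiv ℝ (fun p : ℝ × ℝ => f p.1 p.2)) q w₁ w₂) V :=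
  ((((fderiv_C1 hV hf).continuousOn_fderiv_of_isOpen hV le_rfl).clm_apply
    continuousOn_const).clm_apply continuousOn_const)

lemma hasDerivAt_pdub_fst (hV : IsOpen V) (hf : ContDiffOn ℝ 2 (fun p : ℝ × ℝ => f p.1 p.2) V)
    {q : ℝ × ℝ} (hq : q ∈ V) :
    HasDerivAt (fun s => pdub f s q.2)
      (fderiv ℝ (fderiv ℝ (fun p : ℝ × ℝ => f p.1 p.2)) q ((1:ℝ), (0:ℝ)) ((0:ℝ), (1:ℝ))) q.1 := by
  refine (slice2_fst hV hf hq ((0:ℝ),(1:ℝ))).congr_of_eventuallyEq ?_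
  have hopen : IsOpen {s : ℝ | (s, q.2) ∈ V} := hV.preimage (by continuity)
  filter_upwards [hopen.mem_nhds (by simpa using hq)] with s hs
  exact pdub_eq_fderiv hV (hf.of_le (by norm_num)) hs

lemma hasDerivAt_pdu_snd (hV : IsOpen V) (hf : ContDiffOn ℝ 2 (fun p : ℝ × ℝ => f p.1 p.2) V)
    {q : ℝ × ℝ} (hq : q ∈ V) :
    HasDerivAt (fun t => pdu f q.1 t)
      (fderiv ℝ (fderiv ℝ (fun p : ℝ × ℝ => f p.1 p.2)) q ((0:ℝ), (1:ℝ)) ((1:ℝ), (0:ℝ))) q.2 := by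
  refine (slice2_snd hV hf hq ((1:ℝ),(0:ℝ))).congr_of_eventuallyEq ?_
  have hopen : IsOpen {t : ℝ | (q.1, t) ∈ V} := hV.preimage (by continuity)
  filter_upwards [hopen.mem_nhds (by simpa using hq)] with t ht
  exact pdu_eq_fderiv hV (hf.of_le (by norm_num)) ht

lemma pdu_pdub_eq (hV : IsOpen V) (hf : ContDiffOn ℝ 2 (fun p : ℝ × ℝ => f p.1 p.2) V)
    {q : ℝ × ℝ} (hq : q ∈ V) :
    pdu (pdub f) q.1 q.2
      = fderiv ℝ (fderiv ℝ (fun p : ℝ × ℝ => f p.1 p.2)) q ((1:ℝ), (0:ℝ)) ((0:ℝ), (1:ℝ)) :=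
  (hasDerivAt_pdub_fst hV hf hq).deriv

end CalcAux

lemma ae_ne' (a : ℝ) : ∀ᵐ x : ℝ, x ≠ a := by
  rw [MeasureTheory.ae_iff]
  simpa using Real.volume_singleton

lemma ftc_flux_bound {a b K ε : ℝ} (hab : a ≤ b) {h d F G : ℝ → ℝ}
    (hd : ∀ x ∈ Set.Icc a b, HasDerivAt h (d x) x)
    (hdc : ContinuousOn d (Set.Icc a b))
    (hGc : ContinuousOn G (Set.Icc a b))
    (hK : 0 ≤ K)
    (hrel : ∀ x ∈ Set.Ioo a b, 0 ≤ d x ∧ d x ≤ K * G x ∧ F x = G x)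
    (hflux : (∫ x in a..b, F x) ≤ ε) :
    0 ≤ h b - h a ∧ h b - h a ≤ K * ε := by
  have hIcc : Set.uIcc a b = Set.Icc a b := Set.uIcc_of_le hab
  have hdint : IntervalIntegrable d MeasureTheory.volume a b :=
    (hIcc ▸ hdc : ContinuousOn d (Set.uIcc a b)).intervalIntegrable
  have hGint : IntervalIntegrable G MeasureTheory.volume a b :=
    (hIcc ▸ hGc : ContinuousOn G (Set.uIcc a b)).intervalIntegrable
  have hFTC : (∫ x in a..b, d x) = h b - h a :=
    intervalIntegral.integral_eq_sub_of_hasDerivAt (fun x hx => hd x (hIcc ▸ hx)) hdint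
  have hmem : ∀ᵐ x ∂(MeasureTheory.volume.restrict (Set.Icc a b)), x ∈ Set.Ioo a b := by
    filter_upwards [MeasureTheory.ae_restrict_mem measurableSet_Icc,
      MeasureTheory.ae_restrict_of_ae (ae_ne' a), MeasureTheory.ae_restrict_of_ae (ae_ne' b)]
      with x hx hxa hxb
    exact ⟨lt_of_le_of_ne hx.1 (Ne.symm hxa), lt_of_le_of_ne hx.2 hxb⟩
  have h0 : (0:ℝ) ≤ ∫ x in a..b, d x := by
    have : (∫ x in a..b, (0:ℝ)) ≤ ∫ x in a..b, d x := by
      refine intervalIntegral.integral_mono_ae_restrict hab (by simp) hdint ?_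
      filter_upwards [hmem] with x hx
      simpa using (hrel x hx).1
    simpa using this
  have hFG : (∫ x in a..b, F x) = ∫ x in a..b, G x := by
    refine intervalIntegral.integral_congr_ae ?_
    filter_upwards [ae_ne' b] with x hxb hxmem
    rw [Set.uIoc_of_le hab] at hxmem
    exact (hrel x ⟨hxmem.1, hxmem.2.lt_of_ne hxb⟩).2.2
  have hdK : (∫ x in a..b, d x) ≤ ∫ x in a..b, K * G x := by
    refine intervalIntegral.integral_mono_ae_restrict hab hdint (hGint.const_mul K) ?_
    filter_upwards [hmem] with x hx
    exact (hrel x hx).2.1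
  have hmulK : (∫ x in a..b, K * G x) = K * ∫ x in a..b, G x := by
    simpa using intervalIntegral.integral_const_mul K G
  have hGε : (∫ x in a..b, G x) ≤ ε := hFG ▸ hflux
  have hKG := mul_le_mul_of_nonneg_left hGε hK
  constructor
  · linarith [hFTC ▸ h0]
  · rw [hFTC] at hdK h0
    rw [hmulK] at hdK
    linarith

set_option maxHeartbeats 2000000 in
/-- Small flux implies the basic geometric bounds: there exist `ε₀, C > 0` depending only
on `κ` and `M` such that, for any solution of (N1), (N3) with the axis normalization,
`1/M ≤ Ω ≤ M`, and flux smallness `≤ ε ≤ ε₀`, one has on all of `Q`: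
`|∂_ū r − 1/2| ≤ Cε`, `|∂_u r + 1/2| ≤ Cε`, `|r − ϱ| ≤ Cεϱ` and `|Ω − 1| ≤ Cε`. -/
theorem small_flux_geometry_bounds
    (κ M : ℝ) (hκ : 0 < κ) (hM : 1 ≤ M) :
    ∃ ε₀ > (0:ℝ), ∃ C > (0:ℝ),
      ∀ (g : ℝ → ℝ) (Ω r φ : ℝ → ℝ → ℝ) (ε : ℝ),
        ContDiff ℝ 1 g →
        SmoothNearQ 2 Ω r φ →
        (∀ p ∈ Qset, p.1 < p.2 → 0 < r p.1 p.2) →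
        (∀ p ∈ Qset, p.1 < p.2 → EqN1 κ Ω r φ p.1 p.2) →
        (∀ p ∈ Qset, p.1 < p.2 → EqN3 κ g Ω r φ p.1 p.2) →
        AxisNormalized Ω r φ →
        (∀ p ∈ Qset, M⁻¹ ≤ Ω p.1 p.2 ∧ Ω p.1 p.2 ≤ M) →
        0 < ε →
        (∀ p ∈ Qset, (∫ u' in p.1..p.2, r u' p.2 * (pdu φ u' p.2) ^ 2) ≤ ε) →
        (∀ p ∈ Qset, (∫ u' in p.1..p.2, (g (φ u' p.2)) ^ 2 / r u' p.2) ≤ ε) →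
        (∀ p ∈ Qset, (∫ v' in p.1..p.2, (g (φ p.1 v')) ^ 2 / r p.1 v') ≤ ε) →
        ε ≤ ε₀ →
        ∀ p ∈ Qset,
          |pdub r p.1 p.2 - 1 / 2| ≤ C * ε ∧
          |pdu r p.1 p.2 + 1 / 2| ≤ C * ε ∧
          |r p.1 p.2 - vrho p| ≤ C * ε * vrho p ∧
          |Ω p.1 p.2 - 1| ≤ C * ε := by
  have hM0 : (0:ℝ) < M := lt_of_lt_of_le one_pos hM
  refine ⟨(4*(κ*M^2+1))⁻¹, by positivity, 8*κ*M^2, by positivity, ?_⟩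
  intro g Ω r φ ε hg hsm hrpos hN1 hN3 haxis hΩb hεpos hflux1 hflux2 hflux3 hεle p hp
  obtain ⟨V, hV, hQV, hΩC, hrC, hφC⟩ := hsm
  have hΩpos : ∀ q ∈ Qset, 0 < Ω q.1 q.2 := fun q hq =>
    lt_of_lt_of_le (by positivity) (hΩb q hq).1
  have hK1ε : κ*M^2 * ε ≤ 1/4 := by
    have hpos : (0:ℝ) < 4*(κ*M^2+1) := by positivity
    have h1 : κ*M^2 * ε ≤ κ*M^2 * (4*(κ*M^2+1))⁻¹ :=
      mul_le_mul_of_nonneg_left hεle (by positivity)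
    have h2 : κ*M^2 * (4*(κ*M^2+1))⁻¹ ≤ 1/4 := by
      rw [← div_eq_mul_inv, div_le_div_iff₀ hpos (by norm_num)]
      nlinarith
    linarith
  have hKε : κ*M^2/4 * ε ≤ 1/4 := by linarith
  -- B1 : bound on pdub r
  have B1 : ∀ a b : ℝ, -2 ≤ a → a ≤ b → b ≤ 0 →
      0 ≤ 1/2 - pdub r a b ∧ 1/2 - pdub r a b ≤ κ*M^2/4 * ε := by
    intro a b ha hab hb
    have hsegQ : ∀ s ∈ Set.Icc a b, ((s,b) : ℝ×ℝ) ∈ Qset :=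
      fun s hs => ⟨ha.trans hs.1, hs.2, hb⟩
    have hsub : ∀ s ∈ Set.Icc a b, ((s,b) : ℝ×ℝ) ∈ V := fun s hs => hQV (hsegQ s hs)
    have hmapsto : Set.MapsTo (fun s : ℝ => ((s,b):ℝ×ℝ)) (Set.Icc a b) V := hsub
    have hcurve : ContinuousOn (fun s : ℝ => ((s,b):ℝ×ℝ)) (Set.Icc a b) :=
      (continuous_id.prodMk continuous_const).continuousOn
    set d : ℝ → ℝ := fun s =>
      fderiv ℝ (fderiv ℝ (fun p : ℝ×ℝ => r p.1 p.2)) (s,b) ((1:ℝ),(0:ℝ)) ((0:ℝ),(1:ℝ)) with hd_def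
    set G : ℝ → ℝ := fun s => d s * (4 / (κ * (Ω s b)^2)) with hG_def
    have hΩsl : ContinuousOn (fun s => Ω s b) (Set.Icc a b) :=
      hΩC.continuousOn.comp hcurve hmapsto
    have hΩslpos : ∀ s ∈ Set.Icc a b, 0 < Ω s b := fun s hs => hΩpos _ (hsegQ s hs)
    have hdc : ContinuousOn d (Set.Icc a b) :=
      (cont2 hV hrC ((1:ℝ),(0:ℝ)) ((0:ℝ),(1:ℝ))).comp hcurve hmapsto
    have key := ftc_flux_bound (K := κ*M^2/4) (ε := ε) hab
      (h := fun s => pdub r s b) (d := d) (F := fun s => (g (φ s b))^2 / r s b) (G := G)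
      (fun x hx => hasDerivAt_pdub_fst hV hrC (hsub x hx))
      hdc
      (hdc.mul (continuousOn_const.div (continuousOn_const.mul (hΩsl.pow 2))
        (fun s hs => by have := hΩslpos s hs; positivity)))
      (by positivity)
      (by
        intro x hx
        have hxI : x ∈ Set.Icc a b := Set.Ioo_subset_Icc_self hx
        have hqQ : ((x,b):ℝ×ℝ) ∈ Qset := hsegQ x hxI
        have hrp : 0 < r x b := hrpos _ hqQ hx.2
        have hΩp : 0 < Ω x b := hΩpos _ hqQ
        have hΩle : Ω x b ≤ M := (hΩb _ hqQ).2
        have hdx : d x = κ * (Ω x b)^2 * (g (φ x b))^2 / (4 * r x b) := by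
          have h1 := pdu_pdub_eq hV hrC (hsub x hxI)
          have h2 := hN3 ((x,b):ℝ×ℝ) hqQ hx.2
          rw [EqN3] at h2
          exact h1.symm.trans h2
        have hGx : G x = (g (φ x b))^2 / r x b := by
          have h3 : G x = d x * (4 / (κ * Ω x b ^ 2)) := rfl
          rw [h3, hdx]
          field_simp
        refine ⟨?_, ?_, hGx.symm⟩
        · rw [hdx]
          apply div_nonneg (by positivity) (by linarith)
        · rw [hdx, hGx]
          have hOM : (Ω x b)^2 ≤ M^2 := by nlinarith
          rw [div_mul_div_comm]
          rw [div_le_div_iff₀ (by linarith) (by positivity)]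
          nlinarith [sq_nonneg (g (φ x b)), hrp.le,
            mul_nonneg (mul_nonneg hκ.le (sq_nonneg (g (φ x b)))) (sub_nonneg.mpr hOM)]
      )
      (hflux2 ((a,b):ℝ×ℝ) ⟨ha, hab, hb⟩)
    have hax : pdub r b b = 1/2 := (haxis b ⟨ha.trans hab, hb⟩).2.1
    have k1 : 0 ≤ pdub r b b - pdub r a b := key.1
    have k2 : pdub r b b - pdub r a b ≤ κ*M^2/4 * ε := key.2
    rw [hax] at k1 k2
    exact ⟨k1, k2⟩
  -- B2 : bound on pdu r
  have B2 : ∀ a b : ℝ, -2 ≤ a → a ≤ b → b ≤ 0 →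
      0 ≤ pdu r a b + 1/2 ∧ pdu r a b + 1/2 ≤ κ*M^2/4 * ε := by
    intro a b ha hab hb
    have hsegQ : ∀ t ∈ Set.Icc a b, ((a,t) : ℝ×ℝ) ∈ Qset :=
      fun t ht => ⟨ha, ht.1, ht.2.trans hb⟩
    have hsub : ∀ t ∈ Set.Icc a b, ((a,t) : ℝ×ℝ) ∈ V := fun t ht => hQV (hsegQ t ht)
    have hmapsto : Set.MapsTo (fun t : ℝ => ((a,t):ℝ×ℝ)) (Set.Icc a b) V := hsub
    have hcurve : ContinuousOn (fun t : ℝ => ((a,t):ℝ×ℝ)) (Set.Icc a b) :=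
      (continuous_const.prodMk continuous_id).continuousOn
    set d : ℝ → ℝ := fun t =>
      fderiv ℝ (fderiv ℝ (fun p : ℝ×ℝ => r p.1 p.2)) (a,t) ((0:ℝ),(1:ℝ)) ((1:ℝ),(0:ℝ)) with hd_def
    set G : ℝ → ℝ := fun t => d t * (4 / (κ * (Ω a t)^2)) with hG_def
    have hΩsl : ContinuousOn (fun t => Ω a t) (Set.Icc a b) :=
      hΩC.continuousOn.comp hcurve hmapsto
    have hΩslpos : ∀ t ∈ Set.Icc a b, 0 < Ω a t := fun t ht => hΩpos _ (hsegQ t ht)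
    have hdc : ContinuousOn d (Set.Icc a b) :=
      (cont2 hV hrC ((0:ℝ),(1:ℝ)) ((1:ℝ),(0:ℝ))).comp hcurve hmapsto
    have key := ftc_flux_bound (K := κ*M^2/4) (ε := ε) hab
      (h := fun t => pdu r a t) (d := d) (F := fun t => (g (φ a t))^2 / r a t) (G := G)
      (fun x hx => hasDerivAt_pdu_snd hV hrC (hsub x hx))
      hdc
      (hdc.mul (continuousOn_const.div (continuousOn_const.mul (hΩsl.pow 2))
        (fun t ht => by have := hΩslpos t ht; positivity)))
      (by positivity)
      (by
        intro x hx
        have hxI : x ∈ Set.Icc a b := Set.Ioo_subset_Icc_self hx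
        have hqQ : ((a,x):ℝ×ℝ) ∈ Qset := hsegQ x hxI
        have hrp : 0 < r a x := hrpos _ hqQ hx.1
        have hΩp : 0 < Ω a x := hΩpos _ hqQ
        have hΩle : Ω a x ≤ M := (hΩb _ hqQ).2
        have hdx : d x = κ * (Ω a x)^2 * (g (φ a x))^2 / (4 * r a x) := by
          have hsch := schwarz hV hrC (hsub x hxI) ((0:ℝ),(1:ℝ)) ((1:ℝ),(0:ℝ))
          have h1 := pdu_pdub_eq hV hrC (hsub x hxI)
          have h2 := hN3 ((a,x):ℝ×ℝ) hqQ hx.1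
          rw [EqN3] at h2
          exact hsch.trans (h1.symm.trans h2)
        have hGx : G x = (g (φ a x))^2 / r a x := by
          have h3 : G x = d x * (4 / (κ * Ω a x ^ 2)) := rfl
          rw [h3, hdx]
          field_simp
        refine ⟨?_, ?_, hGx.symm⟩
        · rw [hdx]
          apply div_nonneg (by positivity) (by linarith)
        · rw [hdx, hGx]
          have hOM : (Ω a x)^2 ≤ M^2 := by nlinarith
          rw [div_mul_div_comm]
          rw [div_le_div_iff₀ (by linarith) (by positivity)]
          nlinarith [sq_nonneg (g (φ a x)), hrp.le,
            mul_nonneg (mul_nonneg hκ.le (sq_nonneg (g (φ a x)))) (sub_nonneg.mpr hOM)]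
      )
      (hflux3 ((a,b):ℝ×ℝ) ⟨ha, hab, hb⟩)
    have hax : pdu r a a = -(1/2) := (haxis a ⟨ha, hab.trans hb⟩).2.2.1
    have k1 : 0 ≤ pdu r a b - pdu r a a := key.1
    have k2 : pdu r a b - pdu r a a ≤ κ*M^2/4 * ε := key.2
    rw [hax] at k1 k2
    constructor <;> linarith
  -- B3 : bound on r
  have B3 : ∀ a b : ℝ, -2 ≤ a → a ≤ b → b ≤ 0 →
      |r a b - (b-a)/2| ≤ (κ*M^2/4 * ε) * (b-a) := by
    intro a b ha hab hb
    have hsegQ : ∀ t ∈ Set.Icc a b, ((a,t) : ℝ×ℝ) ∈ Qset :=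
      fun t ht => ⟨ha, ht.1, ht.2.trans hb⟩
    have hsub : ∀ t ∈ Set.Icc a b, ((a,t) : ℝ×ℝ) ∈ V := fun t ht => hQV (hsegQ t ht)
    have hmapsto : Set.MapsTo (fun t : ℝ => ((a,t):ℝ×ℝ)) (Set.Icc a b) V := hsub
    have hcurve : ContinuousOn (fun t : ℝ => ((a,t):ℝ×ℝ)) (Set.Icc a b) :=
      (continuous_const.prodMk continuous_id).continuousOn
    set D : ℝ → ℝ := fun t =>
      fderiv ℝ (fun p : ℝ×ℝ => r p.1 p.2) (a,t) ((0:ℝ),(1:ℝ)) with hD_def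
    have hrC1 : ContDiffOn ℝ 1 (fun p : ℝ×ℝ => r p.1 p.2) V := hrC.of_le (by norm_num)
    have hd : ∀ t ∈ Set.Icc a b, HasDerivAt (fun t' => r a t') (D t) t :=
      fun t ht => slice1_snd hV hrC1 (hsub t ht)
    have hDc : ContinuousOn D (Set.Icc a b) :=
      (cont1 hV hrC1 ((0:ℝ),(1:ℝ))).comp hcurve hmapsto
    have hIcc : Set.uIcc a b = Set.Icc a b := Set.uIcc_of_le hab
    have hDint : IntervalIntegrable D MeasureTheory.volume a b :=
      (hIcc ▸ hDc : ContinuousOn D (Set.uIcc a b)).intervalIntegrable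
    have hFTC : (∫ t in a..b, D t) = r a b - r a a :=
      intervalIntegral.integral_eq_sub_of_hasDerivAt (fun x hx => hd x (hIcc ▸ hx)) hDint
    have hDeq : ∀ t ∈ Set.Icc a b, D t = pdub r a t :=
      fun t ht => (pdub_eq_fderiv hV hrC1 (hsub t ht)).symm
    have hup : (∫ t in a..b, D t) ≤ ∫ _t in a..b, (1/2 : ℝ) := by
      refine intervalIntegral.integral_mono_on hab hDint intervalIntegrable_const ?_
      intro t ht
      rw [hDeq t ht]
      linarith [(B1 a t ha ht.1 (ht.2.trans hb)).1]
    have hlo : (∫ _t in a..b, (1/2 - κ*M^2/4*ε : ℝ)) ≤ ∫ t in a..b, D t := by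
      refine intervalIntegral.integral_mono_on hab intervalIntegrable_const hDint ?_
      intro t ht
      rw [hDeq t ht]
      linarith [(B1 a t ha ht.1 (ht.2.trans hb)).2]
    rw [hFTC, (haxis a ⟨ha, hab.trans hb⟩).1, intervalIntegral.integral_const,
      smul_eq_mul] at hup hlo
    rw [abs_le]
    have hba : 0 ≤ b - a := sub_nonneg.mpr hab
    have hKnn : 0 ≤ κ*M^2/4*ε := by positivity
    constructor <;> nlinarith [mul_nonneg hKnn hba]
  -- B4 : bound on Ω⁻² ∂_u r
  have B4 : ∀ a b : ℝ, -2 ≤ a → a ≤ b → b ≤ 0 →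
      0 ≤ 1/2 + ((Ω a b)^2)⁻¹ * pdu r a b ∧
        1/2 + ((Ω a b)^2)⁻¹ * pdu r a b ≤ κ*M^2 * ε := by
    intro a b ha hab hb
    have hsegQ : ∀ s ∈ Set.Icc a b, ((s,b) : ℝ×ℝ) ∈ Qset :=
      fun s hs => ⟨ha.trans hs.1, hs.2, hb⟩
    have hsub : ∀ s ∈ Set.Icc a b, ((s,b) : ℝ×ℝ) ∈ V := fun s hs => hQV (hsegQ s hs)
    have hmapsto : Set.MapsTo (fun s : ℝ => ((s,b):ℝ×ℝ)) (Set.Icc a b) V := hsub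
    have hcurve : ContinuousOn (fun s : ℝ => ((s,b):ℝ×ℝ)) (Set.Icc a b) :=
      (continuous_id.prodMk continuous_const).continuousOn
    have hΩC1 : ContDiffOn ℝ 1 (fun p : ℝ×ℝ => Ω p.1 p.2) V := hΩC.of_le (by norm_num)
    have hrC1 : ContDiffOn ℝ 1 (fun p : ℝ×ℝ => r p.1 p.2) V := hrC.of_le (by norm_num)
    have hφC1 : ContDiffOn ℝ 1 (fun p : ℝ×ℝ => φ p.1 p.2) V := hφC.of_le (by norm_num)
    set ω' : ℝ → ℝ := fun s =>
      fderiv ℝ (fun p : ℝ×ℝ => Ω p.1 p.2) (s,b) ((1:ℝ),(0:ℝ)) with hω'_def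
    set ρf : ℝ → ℝ := fun s =>
      fderiv ℝ (fun p : ℝ×ℝ => r p.1 p.2) (s,b) ((1:ℝ),(0:ℝ)) with hρf_def
    set ρ' : ℝ → ℝ := fun s =>
      fderiv ℝ (fderiv ℝ (fun p : ℝ×ℝ => r p.1 p.2)) (s,b) ((1:ℝ),(0:ℝ)) ((1:ℝ),(0:ℝ))
      with hρ'_def
    set dd : ℝ → ℝ := fun s => 2 * ω' s / (Ω s b)^3 * ρf s - ((Ω s b)^2)⁻¹ * ρ' s with hdd_def
    set hh : ℝ → ℝ := fun s => -(((Ω s b)^2)⁻¹ * ρf s) with hhh_def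
    have hΩsl : ContinuousOn (fun s => Ω s b) (Set.Icc a b) :=
      hΩC.continuousOn.comp hcurve hmapsto
    have hΩslpos : ∀ s ∈ Set.Icc a b, 0 < Ω s b := fun s hs => hΩpos _ (hsegQ s hs)
    have hω'c : ContinuousOn ω' (Set.Icc a b) :=
      (cont1 hV hΩC1 ((1:ℝ),(0:ℝ))).comp hcurve hmapsto
    have hρfc : ContinuousOn ρf (Set.Icc a b) :=
      (cont1 hV hrC1 ((1:ℝ),(0:ℝ))).comp hcurve hmapsto
    have hρ'c : ContinuousOn ρ' (Set.Icc a b) :=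
      (cont2 hV hrC ((1:ℝ),(0:ℝ)) ((1:ℝ),(0:ℝ))).comp hcurve hmapsto
    have hrsl : ContinuousOn (fun s => r s b) (Set.Icc a b) :=
      hrC.continuousOn.comp hcurve hmapsto
    have hφ'c : ContinuousOn
        (fun s => fderiv ℝ (fun p : ℝ×ℝ => φ p.1 p.2) (s,b) ((1:ℝ),(0:ℝ))) (Set.Icc a b) :=
      (cont1 hV hφC1 ((1:ℝ),(0:ℝ))).comp hcurve hmapsto
    have key := ftc_flux_bound (K := κ*M^2) (ε := ε) hab
      (h := hh) (d := dd) (F := fun s => r s b * (pdu φ s b)^2)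
      (G := fun s => r s b * (fderiv ℝ (fun p : ℝ×ℝ => φ p.1 p.2) (s,b) ((1:ℝ),(0:ℝ)))^2)
      (by
        intro x hx
        have hΩp : 0 < Ω x b := hΩslpos x hx
        have hΩd : HasDerivAt (fun s => Ω s b) (ω' x) x := slice1_fst hV hΩC1 (hsub x hx)
        have hρd : HasDerivAt ρf (ρ' x) x := slice2_fst hV hrC (hsub x hx) ((1:ℝ),(0:ℝ))
        have hcomb := (((hΩd.pow 2).inv (pow_ne_zero 2 hΩp.ne')).mul hρd).neg
        refine hcomb.congr_deriv ?_
        have hne : Ω x b ≠ 0 := ne_of_gt hΩp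
        simp only [hdd_def]
        simp only [Pi.pow_apply, Pi.inv_apply]
        field_simp
        ring)
      (((continuousOn_const.mul hω'c).div (hΩsl.pow 3)
          (fun s hs => pow_ne_zero 3 (hΩslpos s hs).ne')).mul hρfc |>.sub
        (((hΩsl.pow 2).inv₀
          (fun s hs => pow_ne_zero 2 (hΩslpos s hs).ne')).mul hρ'c))
      (hrsl.mul (hφ'c.pow 2))
      (by positivity)
      (by
        intro x hx
        have hxI : x ∈ Set.Icc a b := Set.Ioo_subset_Icc_self hx
        have hqQ : ((x,b):ℝ×ℝ) ∈ Qset := hsegQ x hxI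
        have hrp : 0 < r x b := hrpos _ hqQ hx.2
        have hΩp : 0 < Ω x b := hΩpos _ hqQ
        have hΩlo : M⁻¹ ≤ Ω x b := (hΩb _ hqQ).1
        have hN1' := hN1 ((x,b):ℝ×ℝ) hqQ hx.2
        rw [EqN1] at hN1'
        have hW : HasDerivAt (fun s => ((Ω s b)^2)⁻¹ * pdu r s b) (-(dd x)) x := by
          have hΩd : HasDerivAt (fun s => Ω s b) (ω' x) x := slice1_fst hV hΩC1 (hsub x hxI)
          have hρd : HasDerivAt ρf (ρ' x) x := slice2_fst hV hrC (hsub x hxI) ((1:ℝ),(0:ℝ))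
          have h1 : HasDerivAt (fun s => ((Ω s b)^2)⁻¹ * ρf s) (-(dd x)) x := by
            have hcomb := ((hΩd.pow 2).inv (pow_ne_zero 2 hΩp.ne')).mul hρd
            refine hcomb.congr_deriv ?_
            have hne : Ω x b ≠ 0 := ne_of_gt hΩp
            simp only [hdd_def]
            simp only [Pi.pow_apply, Pi.inv_apply]
            field_simp
            ring
          refine h1.congr_of_eventuallyEq ?_
          have hopen : IsOpen {s : ℝ | ((s,b):ℝ×ℝ) ∈ V} := hV.preimage (by continuity)
          filter_upwards [hopen.mem_nhds (show x ∈ _ from hsub x hxI)] with s hs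
          rw [pdu_eq_fderiv hV hrC1 hs]
        have hLHS : pdu (fun u' v' => ((Ω u' v')^2)⁻¹ * pdu r u' v') x b = -(dd x) := hW.deriv
        rw [hLHS] at hN1'
        have hdx : dd x = ((Ω x b)^2)⁻¹ * κ * r x b * (pdu φ x b)^2 := by linarith
        have hφeq : pdu φ x b = fderiv ℝ (fun p : ℝ×ℝ => φ p.1 p.2) (x,b) ((1:ℝ),(0:ℝ)) :=
          pdu_eq_fderiv hV hφC1 (hsub x hxI)
        have hGF : r x b * (pdu φ x b)^2
            = r x b * (fderiv ℝ (fun p : ℝ×ℝ => φ p.1 p.2) (x,b) ((1:ℝ),(0:ℝ)))^2 := by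
          rw [hφeq]
        refine ⟨?_, ?_, hGF⟩
        · rw [hdx]
          exact mul_nonneg (mul_nonneg (mul_nonneg (inv_nonneg.mpr (sq_nonneg _)) hκ.le)
            hrp.le) (sq_nonneg _)
        · show dd x ≤ κ*M^2 * (r x b * (fderiv ℝ (fun p : ℝ×ℝ => φ p.1 p.2) (x,b)
            ((1:ℝ),(0:ℝ)))^2)
          rw [hdx, ← hGF]
          have h2 : (M^2)⁻¹ ≤ (Ω x b)^2 := by
            rw [← inv_pow]
            exact pow_le_pow_left₀ (by positivity) hΩlo 2
          have h3 : ((Ω x b)^2)⁻¹ ≤ M^2 := by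
            rw [← inv_inv (M^2)]
            exact inv_anti₀ (by positivity) h2
          nlinarith [mul_nonneg (mul_nonneg hκ.le (mul_nonneg hrp.le
            (sq_nonneg (pdu φ x b)))) (sub_nonneg.mpr h3),
            mul_nonneg hrp.le (sq_nonneg (pdu φ x b))])
      (hflux1 ((a,b):ℝ×ℝ) ⟨ha, hab, hb⟩)
    have hbQ : ((b,b):ℝ×ℝ) ∈ V := hQV ⟨ha.trans hab, le_refl b, hb⟩
    have haQ : ((a,b):ℝ×ℝ) ∈ V := hQV ⟨ha, hab, hb⟩
    have hΩax : Ω b b = 1 := (haxis b ⟨ha.trans hab, hb⟩).2.2.2.1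
    have hrax : pdu r b b = -(1/2) := (haxis b ⟨ha.trans hab, hb⟩).2.2.1
    have hρfb : ρf b = pdu r b b := (pdu_eq_fderiv hV hrC1 hbQ).symm
    have hρfa : ρf a = pdu r a b := (pdu_eq_fderiv hV hrC1 haQ).symm
    have hhb : hh b = 1/2 := by
      have : hh b = -(((Ω b b)^2)⁻¹ * ρf b) := rfl
      rw [this, hΩax, hρfb, hrax]
      norm_num
    have hha : hh a = -(((Ω a b)^2)⁻¹ * pdu r a b) := by
      have : hh a = -(((Ω a b)^2)⁻¹ * ρf a) := rfl
      rw [this, hρfa]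
    have k1 : 0 ≤ hh b - hh a := key.1
    have k2 : hh b - hh a ≤ κ*M^2 * ε := key.2
    rw [hhb, hha] at k1 k2
    constructor <;> linarith
  -- final assembly
  obtain ⟨u, v⟩ := p
  obtain ⟨hu2, huv, hv0⟩ := hp
  have hKnn : 0 ≤ κ*M^2*ε := by positivity
  have h1 := B1 u v hu2 huv hv0
  have h2 := B2 u v hu2 huv hv0
  have h3 := B3 u v hu2 huv hv0
  have h4 := B4 u v hu2 huv hv0
  have hvrho : vrho ((u,v):ℝ×ℝ) = (v-u)/2 := rfl
  refine ⟨?_, ?_, ?_, ?_⟩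
  · rw [abs_sub_comm, abs_of_nonneg h1.1]
    linarith
  · rw [abs_of_nonneg h2.1]
    linarith
  · rw [hvrho]
    have hba : 0 ≤ v - u := sub_nonneg.mpr huv
    have : (κ*M^2/4 * ε) * (v-u) ≤ 8*κ*M^2*ε*((v-u)/2) := by nlinarith [mul_nonneg hKnn hba]
    calc |r u v - (v-u)/2| ≤ (κ*M^2/4 * ε) * (v-u) := h3
      _ ≤ 8*κ*M^2*ε*((v-u)/2) := this
  · set O : ℝ := Ω u v with hO_def
    have hOpos : 0 < O := hΩpos ((u,v):ℝ×ℝ) ⟨hu2, huv, hv0⟩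
    have hOle : O ≤ M := (hΩb ((u,v):ℝ×ℝ) ⟨hu2, huv, hv0⟩).2
    set A : ℝ := pdu r u v with hA_def
    set W : ℝ := (O^2)⁻¹ * A with hW_def
    have hOW : O^2 * W = A := by
      rw [hW_def, ← mul_assoc, mul_inv_cancel₀ (by positivity), one_mul]
    have hA1 : 0 ≤ A + 1/2 := h2.1
    have hA2 : A + 1/2 ≤ κ*M^2/4 * ε := h2.2
    have hW1 : 0 ≤ 1/2 + W := h4.1
    have hW2 : 1/2 + W ≤ κ*M^2 * ε := h4.2
    have habsaW : |A - W| ≤ 2*(κ*M^2*ε) := by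
      rw [abs_le]
      constructor <;> linarith
    have hprod : |O^2 - 1| * |W| = |A - W| := by
      rw [← abs_mul, sub_mul, one_mul, hOW]
    have hW4 : 1/4 ≤ |W| := by
      rw [abs_of_nonpos (by linarith)]
      linarith
    have hO2 : |O^2 - 1| ≤ 8*(κ*M^2*ε) := by
      nlinarith [abs_nonneg (O^2-1), mul_nonneg (abs_nonneg (O^2-1)) (sub_nonneg.mpr hW4)]
    have hfact : |O^2 - 1| = |O - 1| * (O + 1) := by
      rw [show O^2 - 1 = (O-1)*(O+1) by ring, abs_mul,
        abs_of_pos (show (0:ℝ) < O+1 by linarith)]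
    nlinarith [abs_nonneg (O-1)]
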